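/- Let γ ∈ GR(4, 4^ℓ) be a primitive pq-th root of unity. For every i with 0 ≤ i < 4 and every k with 1 ≤ k < p, one has D_i(γ^{kq}) = 3(q-1)/4 in GR(4, 4^ℓ), i.e., D_i(γ^{kq}) equals the image of the integer 3(q-1)/4 under the canonical map Z → GR(4, 4^ℓ). -/

import Mathlib

open Finset

private lemma isUnit_pow_eq_pow_iff {M : Type*} [Monoid M] {x : M} (hx : IsUnit x)
    {a b : ℕ} : x ^ a = x ^ b ↔ a ≡ b [MOD orderOf x] := by
  obtain ⟨u, rfl⟩ := hx
  rw [← Units.val_pow_eq_pow_val, ← Units.val_pow_eq_pow_val, orderOf_units]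
  exact ⟨fun h' => pow_eq_pow_iff_modEq.mp (Units.ext h'),
    fun h' => congrArg Units.val (pow_eq_pow_iff_modEq.mpr h')⟩

private lemma wv_sq_zero {k : Type*} [CommRing k] [CharP k 2]
    (y : WittVector 2 k) (hy : y.coeff 0 = 0) :
    WittVector.truncate 2 (y * y) = 0 := by
  obtain ⟨z, rfl⟩ : ∃ z : WittVector 2 k, WittVector.verschiebung z = y := by
    refine ⟨WittVector.mk 2 (fun n => y.coeff (n + 1)), WittVector.ext fun n => ?_⟩
    cases n with
    | zero => simpa [WittVector.verschiebung_coeff_zero] using hy.symm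
    | succ n => simp [WittVector.verschiebung_coeff_succ, WittVector.coeff_mk]
  have key : WittVector.verschiebung z * WittVector.verschiebung z
      = WittVector.verschiebung (z * (z * ((2 : ℕ) : WittVector 2 k))) := by
    rw [← WittVector.verschiebung_mul_frobenius, WittVector.frobenius_verschiebung]
  have h2 : ((2 : ℕ) : k) = 0 := CharP.cast_eq_zero k 2
  have hcoeff0 : (z * (z * ((2 : ℕ) : WittVector 2 k))).coeff 0 = 0 := by
    have := WittVector.constantCoeff (p := 2) (R := k)
    have hmap : WittVector.constantCoeff (z * (z * ((2 : ℕ) : WittVector 2 k)))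
        = z.coeff 0 * (z.coeff 0 * ((2 : ℕ) : k)) := by
      rw [map_mul, map_mul, map_natCast]
      rfl
    rw [WittVector.constantCoeff_apply] at hmap
    rw [hmap, h2, mul_zero, mul_zero]
  rw [key]
  apply TruncatedWittVector.ext
  intro i
  rw [WittVector.coeff_truncate, TruncatedWittVector.coeff_zero]
  fin_cases i
  · exact WittVector.verschiebung_coeff_zero _
  · simpa [WittVector.verschiebung_coeff_succ] using hcoeff0

private lemma four_zero {k : Type*} [CommRing k] [CharP k 2] :
    (4 : TruncatedWittVector 2 2 k) = 0 := by
  have h : (4 : TruncatedWittVector 2 2 k)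
      = WittVector.truncate 2 (((2 : ℕ) : WittVector 2 k) ^ 2) := by
    rw [map_pow, map_natCast]
    norm_num
  rw [h]
  apply TruncatedWittVector.ext
  intro i
  rw [WittVector.coeff_truncate, TruncatedWittVector.coeff_zero]
  apply WittVector.coeff_p_pow_eq_zero
  omega

private lemma isUnit_or_sq {k : Type*} [Field k] [CharP k 2]
    (r : TruncatedWittVector 2 2 k) : IsUnit r ∨ r * r = 0 := by
  obtain ⟨y, rfl⟩ := WittVector.truncate_surjective (p := 2) 2 k r
  by_cases hy : y.coeff 0 = 0
  · exact Or.inr (by rw [← map_mul]; exact wv_sq_zero y hy)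
  · exact Or.inl ((WittVector.isUnit_of_coeff_zero_ne_zero y hy).map _)

private lemma sub_one_isUnit {k : Type*} [Field k] [CharP k 2]
    {β : TruncatedWittVector 2 2 k} {pp : ℕ} (hpp : pp.Prime) (hodd : Odd pp)
    (hβ : orderOf β = pp) : IsUnit (β - 1) := by
  rcases isUnit_or_sq (β - 1) with h | h
  · exact h
  · exfalso
    have h4 : (4 : TruncatedWittVector 2 2 k) = 0 := four_zero
    have hβ4 : β ^ 4 = 1 := by
      linear_combination ((β - 1) ^ 2 + 4 * (β - 1) + 6) * h + (β - 1) * h4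
    have h1 : pp ∣ 4 := hβ ▸ orderOf_dvd_of_pow_eq_one hβ4
    have h2 : pp ≤ 4 := Nat.le_of_dvd (by norm_num) h1
    have h3 := hpp.two_le
    interval_cases pp
    · rw [Nat.odd_iff] at hodd; omega
    · norm_num at h1
    · norm_num at hpp

private lemma geom_zero {k : Type*} [Field k] [CharP k 2]
    {β : TruncatedWittVector 2 2 k} {pp : ℕ} (hpp : pp.Prime) (hodd : Odd pp)
    (hβ : orderOf β = pp) : ∑ a ∈ Finset.range pp, β ^ a = 0 := by
  have hu := sub_one_isUnit hpp hodd hβ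
  have hg : (∑ a ∈ Finset.range pp, β ^ a) * (β - 1) = 0 * (β - 1) := by
    rw [geom_sum_mul, ← hβ, pow_orderOf_eq_one, sub_self, zero_mul]
  exact hu.mul_right_cancel hg

theorem stmt5
    (p q : ℕ) (hp : Nat.Prime p) (hq : Nat.Prime q) (hne : p ≠ q)
    (hpo : Odd p) (hqo : Odd q)
    (hgcd : Nat.gcd (p - 1) (q - 1) = 4)
    (e : ℕ) (he : e = (p - 1) * (q - 1) / 4)
    (g h : ℕ)
    (hgp : orderOf (g : ZMod p) = p - 1)
    (hgq : orderOf (g : ZMod q) = q - 1)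
    (hhp : (h : ZMod p) = (g : ZMod p))
    (hhq : (h : ZMod q) = 1)
    (D : ℕ → Finset (ZMod (p * q)))
    (hD : ∀ i, D i = (Finset.range (e / 4) ×ˢ Finset.range 4).image
        (fun sj => (g : ZMod (p * q)) ^ (4 * sj.1 + i) * (h : ZMod (p * q)) ^ sj.2))
    (ℓ : ℕ) (γ : TruncatedWittVector 2 2 (GaloisField 2 ℓ))
    (hγu : IsUnit γ) (hγo : orderOf γ = p * q)
 :
    ∀ i < 4, ∀ k, 1 ≤ k → k < p →
      ∑ u ∈ D i, (γ ^ (k * q)) ^ u.val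
        = ((3 * (q - 1) / 4 : ℕ) : TruncatedWittVector 2 2 (GaloisField 2 ℓ)) := by
  intro i hi k hk1 hkp
  classical
  haveI factp : Fact (Nat.Prime p) := ⟨hp⟩
  haveI : NeZero p := ⟨hp.pos.ne'⟩
  haveI : NeZero (p * q) := ⟨Nat.mul_ne_zero hp.pos.ne' hq.pos.ne'⟩
  have hp2 := hp.two_le
  have hq2 := hq.two_le
  have h4p : 4 ∣ p - 1 := hgcd ▸ Nat.gcd_dvd_left _ _
  have h4q : 4 ∣ q - 1 := hgcd ▸ Nat.gcd_dvd_right _ _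
  obtain ⟨c, hc⟩ := h4q
  obtain ⟨d, hd⟩ := h4p
  have h4p : 4 ∣ p - 1 := ⟨d, hd⟩
  have he2 : e = (p - 1) * c := by
    rw [he, hc, show (p - 1) * (4 * c) = 4 * ((p - 1) * c) by ring,
      Nat.mul_div_cancel_left _ (by norm_num)]
  obtain ⟨E, hE⟩ : ∃ E, e = 4 * E := ⟨d * c, by rw [he2, hd]; ring⟩
  set β := γ ^ (k * q) with hβdef
  have hβord : orderOf β = p := by
    have hcop : Nat.gcd p k = 1 :=
      hp.coprime_iff_not_dvd.mpr (Nat.not_dvd_of_pos_of_lt (by omega) hkp)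
    rw [hβdef, orderOf_pow' γ (Nat.mul_ne_zero (by omega) (by omega)), hγo, Nat.gcd_mul_right, hcop, one_mul,
      Nat.mul_div_cancel _ hq.pos]
  have hβu : IsUnit β := hγu.pow _
  have hβmod : ∀ a b : ℕ, a ≡ b [MOD p] → β ^ a = β ^ b := fun a b hab =>
    (isUnit_pow_eq_pow_iff hβu).mpr (by rwa [hβord])
  have hgup : IsUnit (g : ZMod p) := by
    refine IsOfFinOrder.isUnit ?_
    rw [← orderOf_pos_iff, hgp]; omega
  have hguq : IsUnit (g : ZMod q) := by
    refine IsOfFinOrder.isUnit ?_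
    rw [← orderOf_pos_iff, hgq]; omega
  have hgmodp : ∀ a b : ℕ, (g : ZMod p) ^ a = (g : ZMod p) ^ b ↔ a ≡ b [MOD p - 1] := by
    intro a b; rw [isUnit_pow_eq_pow_iff hgup, hgp]
  have hgmodq : ∀ a b : ℕ, (g : ZMod q) ^ a = (g : ZMod q) ^ b ↔ a ≡ b [MOD q - 1] := by
    intro a b; rw [isUnit_pow_eq_pow_iff hguq, hgq]
  have hlcm : Nat.lcm (p - 1) (q - 1) = e := by
    rw [Nat.lcm, hgcd, ← he]
  have hinj2 : ∀ x ∈ Finset.range (e / 4) ×ˢ Finset.range 4,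
      ∀ y ∈ Finset.range (e / 4) ×ˢ Finset.range 4,
      (g : ZMod (p * q)) ^ (4 * x.1 + i) * (h : ZMod (p * q)) ^ x.2
        = (g : ZMod (p * q)) ^ (4 * y.1 + i) * (h : ZMod (p * q)) ^ y.2 → x = y := by
    intro x hx y hy hxy
    simp only [Finset.mem_product, Finset.mem_range] at hx hy
    have hq' : (4 * x.1 + i) ≡ (4 * y.1 + i) [MOD q - 1] := by
      have hmq := congrArg (ZMod.castHom (dvd_mul_left q p) (ZMod q)) hxy
      simp only [map_mul, map_pow, map_natCast, hhq, one_pow, mul_one] at hmq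
      exact (hgmodq _ _).mp hmq
    have hp' : (4 * x.1 + i + x.2) ≡ (4 * y.1 + i + y.2) [MOD p - 1] := by
      have hmp := congrArg (ZMod.castHom (dvd_mul_right p q) (ZMod p)) hxy
      simp only [map_mul, map_pow, map_natCast, hhp, ← pow_add] at hmp
      exact (hgmodp _ _).mp hmp
    have hj : x.2 = y.2 := by
      have h4 := Nat.ModEq.of_dvd h4p hp'
      unfold Nat.ModEq at h4
      omega
    have hs : x.1 = y.1 := by
      have hps : 4 * x.1 ≡ 4 * y.1 [MOD p - 1] := by
        rw [hj] at hp'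
        exact Nat.ModEq.add_right_cancel' i (Nat.ModEq.add_right_cancel' y.2 hp')
      have hqs : 4 * x.1 ≡ 4 * y.1 [MOD q - 1] := Nat.ModEq.add_right_cancel' i hq'
      have key : ∀ s t : ℕ, s < e / 4 → t < e / 4 → s ≤ t →
          4 * s ≡ 4 * t [MOD p - 1] → 4 * s ≡ 4 * t [MOD q - 1] → s = t := by
        intro s t hs1 ht1 hst h1 h2
        have hd1 : (p - 1) ∣ 4 * t - 4 * s := (Nat.modEq_iff_dvd' (by omega)).mp h1
        have hd2 : (q - 1) ∣ 4 * t - 4 * s := (Nat.modEq_iff_dvd' (by omega)).mp h2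
        have hdl : e ∣ 4 * t - 4 * s := hlcm ▸ Nat.lcm_dvd hd1 hd2
        have hzero : 4 * t - 4 * s = 0 := by
          rcases Nat.eq_zero_or_pos (4 * t - 4 * s) with h0 | h0
          · exact h0
          · exact absurd (Nat.le_of_dvd h0 hdl) (by omega)
        omega
      rcases le_total x.1 y.1 with hle | hle
      · exact key _ _ hx.1 hy.1 hle hps hqs
      · exact (key _ _ hy.1 hx.1 hle hps.symm hqs.symm).symm
    exact Prod.ext hs hj
  have hgeom : ∑ a ∈ Finset.range p, β ^ a = 0 := geom_zero hp hpo hβord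
  have huniv : ∑ x : ZMod p, β ^ x.val = 0 := by
    rw [← hgeom]
    exact Finset.sum_nbij' (fun x : ZMod p => x.val) (fun a : ℕ => (a : ZMod p))
      (fun a _ => Finset.mem_range.mpr (ZMod.val_lt a))
      (fun a _ => Finset.mem_univ _)
      (fun a _ => ZMod.natCast_rightInverse a)
      (fun a ha => ZMod.val_cast_of_lt (Finset.mem_range.mp ha))
      (fun a _ => rfl)
  have hperiod : ∀ j : ℕ,
      ∑ m ∈ Finset.range (p - 1), β ^ ((g : ZMod p) ^ (m + j)).val = -1 := by
    intro j
    have hinj : ∀ a ∈ Finset.range (p - 1), ∀ b ∈ Finset.range (p - 1),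
        (g : ZMod p) ^ (a + j) = (g : ZMod p) ^ (b + j) → a = b := by
      intro a ha b hb hab
      rw [Finset.mem_range] at ha hb
      have hmm := Nat.ModEq.add_right_cancel' j ((hgmodp _ _).mp hab)
      unfold Nat.ModEq at hmm
      rwa [Nat.mod_eq_of_lt ha, Nat.mod_eq_of_lt hb] at hmm
    have himg : (Finset.range (p - 1)).image (fun m : ℕ => (g : ZMod p) ^ (m + j))
        = Finset.univ.erase (0 : ZMod p) := by
      apply Finset.eq_of_subset_of_card_le
      · intro x hx
        obtain ⟨m, hm, rfl⟩ := Finset.mem_image.mp hx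
        exact Finset.mem_erase.mpr ⟨(hgup.pow _).ne_zero, Finset.mem_univ _⟩
      · rw [Finset.card_erase_of_mem (Finset.mem_univ _), Finset.card_univ, ZMod.card,
          Finset.card_image_of_injOn
            (fun a ha b hb hab => hinj a (Finset.mem_coe.mp ha) b (Finset.mem_coe.mp hb) hab),
          Finset.card_range]
    calc ∑ m ∈ Finset.range (p - 1), β ^ ((g : ZMod p) ^ (m + j)).val
        = ∑ x ∈ (Finset.range (p - 1)).image (fun m : ℕ => (g : ZMod p) ^ (m + j)),
            β ^ x.val := by rw [Finset.sum_image hinj]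
      _ = ∑ x ∈ Finset.univ.erase (0 : ZMod p), β ^ x.val := by rw [himg]
      _ = -1 := by
          have h0 : ∑ x ∈ Finset.univ.erase (0 : ZMod p), β ^ x.val + β ^ (0 : ZMod p).val
              = ∑ x : ZMod p, β ^ x.val := Finset.sum_erase_add _ _ (Finset.mem_univ _)
          rw [huniv, ZMod.val_zero, pow_zero] at h0
          linear_combination h0
  have hblocks : ∀ cc : ℕ, ∀ j : ℕ,
      ∑ m ∈ Finset.range (cc * (p - 1)), β ^ ((g : ZMod p) ^ (m + j)).val
        = cc • (-1 : TruncatedWittVector 2 2 (GaloisField 2 ℓ)) := by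
    intro cc
    induction cc with
    | zero => intro j; simp
    | succ n ih =>
      intro j
      rw [Nat.succ_mul, Finset.sum_range_add]
      have hcg : ∀ m ∈ Finset.range (p - 1),
          β ^ ((g : ZMod p) ^ (n * (p - 1) + m + j)).val
            = β ^ ((g : ZMod p) ^ (m + (n * (p - 1) + j))).val := by
        intro m _
        rw [show n * (p - 1) + m + j = m + (n * (p - 1) + j) by ring]
      rw [Finset.sum_congr rfl hcg, hperiod, ih, succ_nsmul]
  rw [hD i, Finset.sum_image hinj2]
  have hterm : ∀ sj ∈ Finset.range (e / 4) ×ˢ Finset.range 4,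
      β ^ (((g : ZMod (p * q)) ^ (4 * sj.1 + i) * (h : ZMod (p * q)) ^ sj.2).val)
        = β ^ ((g : ZMod p) ^ (4 * sj.1 + sj.2 + i)).val := by
    intro sj _
    apply hβmod
    have hcast : ((g : ZMod (p * q)) ^ (4 * sj.1 + i) * (h : ZMod (p * q)) ^ sj.2)
        = ((g ^ (4 * sj.1 + i) * h ^ sj.2 : ℕ) : ZMod (p * q)) := by push_cast; ring
    rw [hcast, ZMod.val_natCast]
    have hmodph : h ≡ g [MOD p] := (ZMod.natCast_eq_natCast_iff _ _ _).mp hhp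
    calc (g ^ (4 * sj.1 + i) * h ^ sj.2) % (p * q)
        ≡ g ^ (4 * sj.1 + i) * h ^ sj.2 [MOD p] :=
          Nat.ModEq.of_dvd (dvd_mul_right p q) (Nat.mod_modEq _ _)
      _ ≡ g ^ (4 * sj.1 + i) * g ^ sj.2 [MOD p] := Nat.ModEq.mul_left _ (hmodph.pow _)
      _ = g ^ (4 * sj.1 + sj.2 + i) := by rw [← pow_add]; congr 1; omega
      _ ≡ ((g : ZMod p) ^ (4 * sj.1 + sj.2 + i)).val [MOD p] := by
          rw [show ((g : ZMod p) ^ (4 * sj.1 + sj.2 + i))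
              = ((g ^ (4 * sj.1 + sj.2 + i) : ℕ) : ZMod p) by push_cast; rfl,
            ZMod.val_natCast]
          exact (Nat.mod_modEq _ _).symm
  rw [Finset.sum_congr rfl hterm]
  have hreindex : ∑ sj ∈ Finset.range (e / 4) ×ˢ Finset.range 4,
      β ^ ((g : ZMod p) ^ (4 * sj.1 + sj.2 + i)).val
      = ∑ m ∈ Finset.range e, β ^ ((g : ZMod p) ^ (m + i)).val := by
    refine Finset.sum_nbij' (fun sj : ℕ × ℕ => 4 * sj.1 + sj.2) (fun m => (m / 4, m % 4))
      ?_ ?_ ?_ ?_ ?_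
    · intro a ha
      simp only [Finset.mem_product, Finset.mem_range] at ha ⊢
      omega
    · intro a ha
      simp only [Finset.mem_product, Finset.mem_range] at ha ⊢
      constructor <;> omega
    · intro a ha
      simp only [Finset.mem_product, Finset.mem_range] at ha
      have h1 : (4 * a.1 + a.2) / 4 = a.1 := by omega
      have h2 : (4 * a.1 + a.2) % 4 = a.2 := by omega
      exact Prod.ext h1 h2
    · intro a ha
      simp only [Finset.mem_range] at ha
      simp only []
      omega
    · intro a ha; rfl
  rw [hreindex, show e = c * (p - 1) by rw [he2]; ring, hblocks c i]
  have h34 : 3 * (q - 1) / 4 = 3 * c := by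
    rw [hc, show 3 * (4 * c) = 4 * (3 * c) by ring, Nat.mul_div_cancel_left _ (by norm_num)]
  rw [h34]
  have h4R : (4 : TruncatedWittVector 2 2 (GaloisField 2 ℓ)) = 0 := four_zero
  rw [nsmul_eq_mul]
  push_cast
  linear_combination (-(c : TruncatedWittVector 2 2 (GaloisField 2 ℓ))) * h4R
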